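/- Let λ be a partition of N with 2k−1 distinct parts. Then the number of nested collections A consisting of one singleton part and k−1 pairs, using each part of λ exactly once, such that no pair (a, b) and singleton (c) satisfy a ≥ c ≥ b, and no two pairs (a, b), (c, d) satisfy a > c ≥ b > d, equals the Catalan number C_k. -/

import Mathlib

open Finset

def Noncross (A : Finset (ℕ × ℕ)) : Prop :=
  ∀ p ∈ A, ∀ q ∈ A, ¬(q.1 < p.1 ∧ p.2 ≤ q.1 ∧ q.2 < p.2)

def IsNCM (S : Finset ℕ) (A : Finset (ℕ × ℕ)) : Prop :=
  (∀ p ∈ A, p.2 < p.1) ∧ (A.val.bind fun p => {p.1, p.2}) = S.val ∧ Noncross A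

lemma mem_bind_of_mem {A : Finset (ℕ × ℕ)} {p : ℕ × ℕ} (hp : p ∈ A) :
    p.1 ∈ (A.val.bind fun p => ({p.1, p.2} : Multiset ℕ)) ∧
    p.2 ∈ (A.val.bind fun p => ({p.1, p.2} : Multiset ℕ)) := by
  constructor <;> exact Multiset.mem_bind.2 ⟨p, hp, by simp⟩

lemma IsNCM.fst_mem {S A} (h : IsNCM S A) {p : ℕ × ℕ} (hp : p ∈ A) : p.1 ∈ S := by
  have := (mem_bind_of_mem hp).1; rw [h.2.1] at this; exact this

lemma IsNCM.snd_mem {S A} (h : IsNCM S A) {p : ℕ × ℕ} (hp : p ∈ A) : p.2 ∈ S := by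
  have := (mem_bind_of_mem hp).2; rw [h.2.1] at this; exact this

lemma IsNCM.coords_ne {S A} (h : IsNCM S A) {p q : ℕ × ℕ} (hp : p ∈ A) (hq : q ∈ A)
    (hne : p ≠ q) : p.1 ≠ q.1 ∧ p.1 ≠ q.2 ∧ p.2 ≠ q.1 ∧ p.2 ≠ q.2 := by
  have hnd : (A.val.bind fun p => ({p.1, p.2} : Multiset ℕ)).Nodup := by
    rw [h.2.1]; exact S.nodup
  have hcons : A.val = p ::ₘ A.val.erase p := (Multiset.cons_erase hp).symm
  rw [hcons, Multiset.cons_bind, Multiset.nodup_add] at hnd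
  have hq' : q ∈ A.val.erase p := (Multiset.mem_erase_of_ne (Ne.symm hne)).2 hq
  have hdisj := hnd.2.2
  have key : ∀ x : ℕ, x ∈ ({p.1, p.2} : Multiset ℕ) → x ∈ ({q.1, q.2} : Multiset ℕ) → False := by
    intro x hx1 hx2
    exact Multiset.disjoint_left.1 hdisj hx1 (Multiset.mem_bind.2 ⟨q, hq', hx2⟩)
  refine ⟨?_, ?_, ?_, ?_⟩ <;> intro he
  · exact key p.1 (by simp) (by simp [he])
  · exact key p.1 (by simp) (by simp [he])
  · exact key p.2 (by simp) (by simp [he])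
  · exact key p.2 (by simp) (by simp [he])

lemma IsNCM.exists_min_pair {S A} (h : IsNCM S A) {m : ℕ} (hm : m ∈ S)
    (hmin : ∀ x ∈ S, m ≤ x) : ∃ p ∈ A, p.2 = m := by
  have : m ∈ (A.val.bind fun p => ({p.1, p.2} : Multiset ℕ)) := by rw [h.2.1]; exact hm
  obtain ⟨p, hp, hmem⟩ := Multiset.mem_bind.1 this
  have hp' : p ∈ A := hp
  simp only [Multiset.insert_eq_cons, Multiset.mem_cons, Multiset.mem_singleton] at hmem
  rcases hmem with h1 | h2
  · exfalso
    have := h.1 p hp'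
    have := hmin p.2 (h.snd_mem hp')
    omega
  · exact ⟨p, hp', h2.symm⟩

/-- the part of `S` strictly between `m` and `a`. -/
def below (S : Finset ℕ) (m a : ℕ) : Finset ℕ := S.filter (fun x => m < x ∧ x < a)
/-- the part of `S` strictly above `a`. -/
def above (S : Finset ℕ) (a : ℕ) : Finset ℕ := S.filter (fun x => a < x)

lemma Sval_eq {S : Finset ℕ} {m a : ℕ} (hm : m ∈ S) (ha : a ∈ S)
    (hmin : ∀ x ∈ S, m ≤ x) (hma : m < a) :
    S.val = ({a, m} : Multiset ℕ) + (below S m a).val + (above S a).val := by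
  have hnd : (({a, m} : Multiset ℕ) + (below S m a).val + (above S a).val).Nodup := by
    rw [Multiset.nodup_add, Multiset.nodup_add]
    refine ⟨⟨by simp [Nat.ne_of_gt hma], (below S m a).nodup, ?_⟩, (above S a).nodup, ?_⟩
    · rw [Multiset.disjoint_left]
      intro x hx hx'
      simp only [Multiset.insert_eq_cons, Multiset.mem_cons, Multiset.mem_singleton] at hx
      have := Finset.mem_filter.1 hx'
      rcases hx with rfl | rfl <;> omega
    · rw [Multiset.disjoint_left]
      intro x hx hx'
      have hx2 := Finset.mem_filter.1 hx'
      simp only [Multiset.mem_add, Multiset.insert_eq_cons, Multiset.mem_cons,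
        Multiset.mem_singleton] at hx
      rcases hx with (rfl | rfl) | hb
      · omega
      · omega
      · have := Finset.mem_filter.1 hb; omega
  rw [(Multiset.Nodup.ext S.nodup hnd)]
  intro x
  simp only [Multiset.mem_add, Multiset.insert_eq_cons, Multiset.mem_cons,
    Multiset.mem_singleton, ← Finset.mem_def, below, above, Finset.mem_filter]
  constructor
  · intro hx
    have hmx := hmin x hx
    rcases Nat.lt_trichotomy x a with h1 | h1 | h1
    · rcases Nat.lt_or_ge m x with h2 | h2
      · tauto
      · have : x = m := le_antisymm h2 hmx
        tauto
    · tauto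
    · tauto
  · rintro (((rfl | rfl) | ⟨h1, -⟩) | ⟨h1, -⟩) <;> first | exact ha | exact hm | exact h1
lemma union_insert_val {a : ℕ × ℕ} {B C : Finset (ℕ × ℕ)} (hd : Disjoint B C)
    (hn : a ∉ B ∪ C) : (insert a (B ∪ C)).val = a ::ₘ (B.val + C.val) := by
  rw [Finset.insert_val_of_notMem hn, ← Finset.disjUnion_eq_union B C hd]
  rfl

lemma insert_isNCM {S : Finset ℕ} {m a : ℕ} (hm : m ∈ S) (ha : a ∈ S)
    (hmin : ∀ x ∈ S, m ≤ x) (hma : m < a)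
    {B C : Finset (ℕ × ℕ)} (hB : IsNCM (below S m a) B) (hC : IsNCM (above S a) C) :
    IsNCM S (insert (a, m) (B ∪ C)) := by
  have hBc : ∀ p ∈ B, m < p.1 ∧ p.1 < a ∧ m < p.2 ∧ p.2 < a := by
    intro p hp
    have h1 := Finset.mem_filter.1 (hB.fst_mem hp)
    have h2 := Finset.mem_filter.1 (hB.snd_mem hp)
    exact ⟨h1.2.1, h1.2.2, h2.2.1, h2.2.2⟩
  have hCc : ∀ p ∈ C, a < p.1 ∧ a < p.2 := by
    intro p hp
    exact ⟨(Finset.mem_filter.1 (hC.fst_mem hp)).2, (Finset.mem_filter.1 (hC.snd_mem hp)).2⟩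
  have hdBC : Disjoint B C := by
    rw [Finset.disjoint_left]
    intro p hp hp'
    have := (hBc p hp).2.1
    have := (hCc p hp').1
    omega
  have hnotin : (a, m) ∉ B ∪ C := by
    intro hmem
    rcases Finset.mem_union.1 hmem with hmem | hmem
    · have := (hBc _ hmem).2.1; simp at this
    · have := (hCc _ hmem).1; simp at this
  refine ⟨?_, ?_, ?_⟩
  · intro p hp
    rcases Finset.mem_insert.1 hp with rfl | hp'
    · exact hma
    · rcases Finset.mem_union.1 hp' with h | h
      · exact hB.1 p h
      · exact hC.1 p h
  · rw [union_insert_val hdBC hnotin, Multiset.cons_bind, Multiset.add_bind,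
      hB.2.1, hC.2.1, Sval_eq hm ha hmin hma, add_assoc]
  · intro p hp q hq
    rcases Finset.mem_insert.1 hp with rfl | hp'
    · rcases Finset.mem_insert.1 hq with rfl | hq'
      · rintro ⟨h1, -, -⟩; exact lt_irrefl _ h1
      · rcases Finset.mem_union.1 hq' with h | h
        · obtain ⟨b1, b2, b3, b4⟩ := hBc q h
          rintro ⟨h1, h2, h3⟩; dsimp only at h1 h2 h3; omega
        · obtain ⟨c1, c2⟩ := hCc q h
          rintro ⟨h1, h2, h3⟩; dsimp only at h1 h2 h3; omega
    · rcases Finset.mem_insert.1 hq with rfl | hq'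
      · rcases Finset.mem_union.1 hp' with h | h
        · obtain ⟨b1, b2, b3, b4⟩ := hBc p h
          rintro ⟨h1, h2, h3⟩; dsimp only at h1 h2 h3; omega
        · obtain ⟨c1, c2⟩ := hCc p h
          rintro ⟨h1, h2, h3⟩; dsimp only at h1 h2 h3; omega
      · rcases Finset.mem_union.1 hp' with h | h <;> rcases Finset.mem_union.1 hq' with h' | h'
        · exact hB.2.2 p h q h'
        · obtain ⟨b1, b2, b3, b4⟩ := hBc p h
          obtain ⟨c1, c2⟩ := hCc q h'
          rintro ⟨h1, h2, h3⟩; omega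
        · obtain ⟨c1, c2⟩ := hCc p h
          obtain ⟨b1, b2, b3, b4⟩ := hBc q h'
          rintro ⟨h1, h2, h3⟩; omega
        · exact hC.2.2 p h q h'

lemma IsNCM.decomp {S : Finset ℕ} {A : Finset (ℕ × ℕ)} (h : IsNCM S A) {m : ℕ}
    (hm : m ∈ S) (hmin : ∀ x ∈ S, m ≤ x) :
    ∃ a, m < a ∧ a ∈ S ∧ (a, m) ∈ A ∧
      A = insert (a, m) (A.filter (fun p => p.1 < a) ∪ A.filter (fun p => a < p.1)) ∧
      IsNCM (below S m a) (A.filter (fun p => p.1 < a)) ∧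
      IsNCM (above S a) (A.filter (fun p => a < p.1)) := by
  classical
  obtain ⟨p0, hp0, hp02⟩ := h.exists_min_pair hm hmin
  obtain ⟨a, m', rfl⟩ : ∃ x y, p0 = (x, y) := ⟨p0.1, p0.2, rfl⟩
  have hpe : m = m' := hp02.symm
  subst hpe
  have ha : a ∈ S := h.fst_mem hp0
  have hma : m < a := h.1 _ hp0
  set B := A.filter (fun p => p.1 < a) with hBdef
  set C := A.filter (fun p => a < p.1) with hCdef
  -- coordinates of pairs other than (a, m)
  have hgen : ∀ p ∈ A, p ≠ (a, m) → m < p.2 ∧ p.1 ≠ a ∧ p.2 ≠ a := by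
    intro p hp hne
    obtain ⟨n1, n2, n3, n4⟩ := h.coords_ne hp hp0 hne
    have h2 := hmin p.2 (h.snd_mem hp)
    exact ⟨lt_of_le_of_ne h2 (Ne.symm n4), n1, n3⟩
  have hBc : ∀ p ∈ B, p.1 ∈ below S m a ∧ p.2 ∈ below S m a := by
    intro p hp
    have hpA := Finset.mem_filter.1 hp
    have hne : p ≠ (a, m) := by
      intro he; rw [he] at hpA; exact absurd hpA.2 (lt_irrefl a)
    obtain ⟨g1, g2, g3⟩ := hgen p hpA.1 hne
    have hp1 := h.1 p hpA.1
    refine ⟨Finset.mem_filter.2 ⟨h.fst_mem hpA.1, by omega, hpA.2⟩,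
      Finset.mem_filter.2 ⟨h.snd_mem hpA.1, g1, by omega⟩⟩
  have hCc : ∀ p ∈ C, p.1 ∈ above S a ∧ p.2 ∈ above S a := by
    intro p hp
    have hpA := Finset.mem_filter.1 hp
    have hne : p ≠ (a, m) := by
      intro he; rw [he] at hpA; exact absurd hpA.2 (lt_irrefl a)
    obtain ⟨g1, g2, g3⟩ := hgen p hpA.1 hne
    have hgt : a < p.2 := by
      by_contra hle
      exact h.2.2 p hpA.1 (a, m) hp0 ⟨hpA.2, by omega, g1⟩
    exact ⟨Finset.mem_filter.2 ⟨h.fst_mem hpA.1, hpA.2⟩,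
      Finset.mem_filter.2 ⟨h.snd_mem hpA.1, hgt⟩⟩
  have hdBC : Disjoint B C := by
    rw [Finset.disjoint_left]
    intro p hp hp'
    have h1 := (Finset.mem_filter.1 hp).2
    have h2 := (Finset.mem_filter.1 hp').2
    omega
  have hnotin : (a, m) ∉ B ∪ C := by
    intro hmem
    rcases Finset.mem_union.1 hmem with hmem | hmem <;>
      · have := (Finset.mem_filter.1 hmem).2; simp at this
  have hAeq : A = insert (a, m) (B ∪ C) := by
    ext p
    constructor
    · intro hp
      by_cases he : p = (a, m)
      · exact Finset.mem_insert.2 (Or.inl he)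
      · obtain ⟨g1, g2, g3⟩ := hgen p hp he
        rcases Nat.lt_or_ge p.1 a with hlt | hge
        · exact Finset.mem_insert.2 (Or.inr (Finset.mem_union_left _
            (Finset.mem_filter.2 ⟨hp, hlt⟩)))
        · have : a < p.1 := by omega
          exact Finset.mem_insert.2 (Or.inr (Finset.mem_union_right _
            (Finset.mem_filter.2 ⟨hp, this⟩)))
    · intro hp
      rcases Finset.mem_insert.1 hp with rfl | hp'
      · exact hp0
      · rcases Finset.mem_union.1 hp' with hh | hh <;> exact (Finset.mem_filter.1 hh).1
  have hbind : B.val.bind (fun p => ({p.1, p.2} : Multiset ℕ)) + C.val.bind (fun p => ({p.1, p.2} : Multiset ℕ))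
      = (below S m a).val + (above S a).val := by
    have h1 : A.val = (a, m) ::ₘ (B.val + C.val) := by
      rw [hAeq]; exact union_insert_val hdBC hnotin
    have h2 := h.2.1
    rw [h1, Multiset.cons_bind, Multiset.add_bind, Sval_eq hm ha hmin hma, add_assoc] at h2
    exact add_left_cancel h2
  have hBbind : B.val.bind (fun p => ({p.1, p.2} : Multiset ℕ)) = (below S m a).val := by
    have hfil := congrArg (Multiset.filter (· ∈ below S m a)) hbind
    rw [Multiset.filter_add, Multiset.filter_add] at hfil
    rw [Multiset.filter_eq_self.2, Multiset.filter_eq_nil.2, Multiset.filter_eq_self.2,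
      Multiset.filter_eq_nil.2, add_zero, add_zero] at hfil
    · exact hfil
    · intro x hx
      have hxa := (Finset.mem_filter.1 hx).2
      intro hxb
      have := (Finset.mem_filter.1 hxb).2.2
      omega
    · intro x hx
      exact hx
    · intro x hx
      obtain ⟨p, hp, hxp⟩ := Multiset.mem_bind.1 hx
      obtain ⟨hc1, hc2⟩ := hCc p hp
      simp only [Multiset.insert_eq_cons, Multiset.mem_cons, Multiset.mem_singleton] at hxp
      intro hxb
      have := (Finset.mem_filter.1 hxb).2.2
      have ha1 := (Finset.mem_filter.1 hc1).2
      have ha2 := (Finset.mem_filter.1 hc2).2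
      rcases hxp with rfl | rfl <;> omega
    · intro x hx
      obtain ⟨p, hp, hxp⟩ := Multiset.mem_bind.1 hx
      obtain ⟨hc1, hc2⟩ := hBc p hp
      simp only [Multiset.insert_eq_cons, Multiset.mem_cons, Multiset.mem_singleton] at hxp
      rcases hxp with rfl | rfl <;> assumption
  have hCbind : C.val.bind (fun p => ({p.1, p.2} : Multiset ℕ)) = (above S a).val := by
    have := hbind
    rw [hBbind] at this
    exact add_left_cancel this
  refine ⟨a, hma, ha, hp0, hAeq, ⟨?_, hBbind, ?_⟩, ⟨?_, hCbind, ?_⟩⟩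
  · intro p hp; exact h.1 p (Finset.mem_filter.1 hp).1
  · intro p hp q hq; exact h.2.2 p (Finset.mem_filter.1 hp).1 q (Finset.mem_filter.1 hq).1
  · intro p hp; exact h.1 p (Finset.mem_filter.1 hp).1
  · intro p hp q hq; exact h.2.2 p (Finset.mem_filter.1 hp).1 q (Finset.mem_filter.1 hq).1
open Classical in
noncomputable def NCMs (S : Finset ℕ) : Finset (Finset (ℕ × ℕ)) :=
  (S ×ˢ S).powerset.filter (IsNCM S)

lemma mem_NCMs {S : Finset ℕ} {A : Finset (ℕ × ℕ)} : A ∈ NCMs S ↔ IsNCM S A := by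
  classical
  simp only [NCMs, Finset.mem_filter, Finset.mem_powerset, and_iff_right_iff_imp]
  intro h p hp
  have h1 := (mem_bind_of_mem hp).1
  have h2 := (mem_bind_of_mem hp).2
  rw [h.2.1] at h1 h2
  exact Finset.mem_product.2 ⟨h1, h2⟩

lemma IsNCM.card_eq {S : Finset ℕ} {A : Finset (ℕ × ℕ)} (h : IsNCM S A) :
    S.card = 2 * A.card := by
  have h0 : S.val.card = (A.val.bind fun p => ({p.1, p.2} : Multiset ℕ)).card := by rw [h.2.1]
  rw [Multiset.card_bind] at h0
  have h1 : (A.val.map (Multiset.card ∘ fun p => ({p.1, p.2} : Multiset ℕ))) = A.val.map (fun _ => 2) :=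
    Multiset.map_congr rfl (fun p _ => rfl)
  rw [h1] at h0
  simpa [Multiset.map_const', Multiset.sum_replicate, Nat.mul_comm] using h0

lemma filter_insert_union {S : Finset ℕ} {m a : ℕ} {B C : Finset (ℕ × ℕ)}
    (hB : IsNCM (below S m a) B) (hC : IsNCM (above S a) C) :
    (insert (a, m) (B ∪ C)).filter (fun p => p.1 < a) = B ∧
    (insert (a, m) (B ∪ C)).filter (fun p => a < p.1) = C := by
  have hBlt : ∀ p ∈ B, p.1 < a := fun p hp => (Finset.mem_filter.1 (hB.fst_mem hp)).2.2
  have hCgt : ∀ p ∈ C, a < p.1 := fun p hp => (Finset.mem_filter.1 (hC.fst_mem hp)).2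
  constructor <;> ext p <;>
    simp only [Finset.mem_filter, Finset.mem_insert, Finset.mem_union]
  · constructor
    · rintro ⟨rfl | hp | hp, hlt⟩
      · simp at hlt
      · exact hp
      · exact absurd hlt (by have := hCgt p hp; omega)
    · intro hp; exact ⟨Or.inr (Or.inl hp), hBlt p hp⟩
  · constructor
    · rintro ⟨rfl | hp | hp, hlt⟩
      · simp at hlt
      · exact absurd hlt (by have := hBlt p hp; omega)
      · exact hp
    · intro hp; exact ⟨Or.inr (Or.inr hp), hCgt p hp⟩

lemma min_pair_unique {S : Finset ℕ} {m a : ℕ} (hma : m < a) {B C : Finset (ℕ × ℕ)}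
    (hB : IsNCM (below S m a) B) (hC : IsNCM (above S a) C) :
    ∀ p ∈ insert (a, m) (B ∪ C), p.2 = m → p = (a, m) := by
  intro p hp hpm
  rcases Finset.mem_insert.1 hp with rfl | hp'
  · rfl
  rcases Finset.mem_union.1 hp' with h | h
  · have := (Finset.mem_filter.1 (hB.snd_mem h)).2.1; omega
  · have h1 := (Finset.mem_filter.1 (hC.snd_mem h)).2
    omega

lemma card_NCMs (n : ℕ) (S : Finset ℕ) (hS : S.card = 2 * n) :
    (NCMs S).card = catalan n := by
  induction n using Nat.strong_induction_on generalizing S with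
  | _ n IH =>
  cases n with
  | zero =>
    have hSe : S = ∅ := Finset.card_eq_zero.1 (by simpa using hS)
    subst hSe
    have h1 : NCMs ∅ = {∅} := by
      ext A
      rw [mem_NCMs]
      simp only [Finset.mem_singleton]
      constructor
      · intro hA
        by_contra hne
        obtain ⟨p, hp⟩ := Finset.nonempty_iff_ne_empty.2 hne
        have := hA.fst_mem hp
        simp at this
      · rintro rfl
        exact ⟨by simp, by simp, by intro p hp; simp at hp⟩
    rw [h1]
    simp [catalan_zero]
  | succ n =>
    classical
    have hne : S.Nonempty := Finset.card_pos.1 (by omega)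
    set m := S.min' hne with hmdef
    have hm : m ∈ S := S.min'_mem hne
    have hmin : ∀ x ∈ S, m ≤ x := fun x hx => S.min'_le x hx
    set g : ℕ → Finset (Finset (ℕ × ℕ)) := fun a =>
      ((NCMs (below S m a)) ×ˢ (NCMs (above S a))).image
        (fun BC => insert (a, m) (BC.1 ∪ BC.2)) with hgdef
    have hgmem : ∀ a, ∀ A ∈ g a, ∃ B C, IsNCM (below S m a) B ∧ IsNCM (above S a) C ∧
        A = insert (a, m) (B ∪ C) := by
      intro a A hA
      rw [hgdef] at hA
      obtain ⟨BC, hBC, hAeq⟩ := Finset.mem_image.1 hA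
      obtain ⟨h1, h2⟩ := Finset.mem_product.1 hBC
      exact ⟨BC.1, BC.2, mem_NCMs.1 h1, mem_NCMs.1 h2, hAeq.symm⟩
    -- step 1: decomposition of the set of matchings
    have hunion : NCMs S = (S.erase m).biUnion g := by
      ext A
      simp only [Finset.mem_biUnion]
      constructor
      · intro hA
        obtain ⟨a, hma, haS, hpA, hAeq, hBncm, hCncm⟩ := (mem_NCMs.1 hA).decomp hm hmin
        refine ⟨a, Finset.mem_erase.2 ⟨by omega, haS⟩, ?_⟩
        rw [hgdef]
        refine Finset.mem_image.2 ⟨(A.filter (fun p => p.1 < a), A.filter (fun p => a < p.1)),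
          Finset.mem_product.2 ⟨mem_NCMs.2 hBncm, mem_NCMs.2 hCncm⟩, hAeq.symm⟩
      · rintro ⟨a, haem, hA⟩
        obtain ⟨B, C, hBncm, hCncm, rfl⟩ := hgmem a A hA
        have haS := (Finset.mem_erase.1 haem).2
        have hma : m < a := lt_of_le_of_ne (hmin a haS) (Ne.symm (Finset.mem_erase.1 haem).1)
        exact mem_NCMs.2 (insert_isNCM hm haS hmin hma hBncm hCncm)
    -- step 2: disjointness
    have hdisj : ∀ a ∈ S.erase m, ∀ b ∈ S.erase m, a ≠ b → Disjoint (g a) (g b) := by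
      intro a haem b hbem hab
      have hma : m < a := lt_of_le_of_ne (hmin a (Finset.mem_erase.1 haem).2)
        (Ne.symm (Finset.mem_erase.1 haem).1)
      rw [Finset.disjoint_left]
      intro A hA hA'
      obtain ⟨B, C, hBncm, hCncm, rfl⟩ := hgmem a A hA
      obtain ⟨B', C', hBncm', hCncm', heq⟩ := hgmem b _ hA'
      have hmem : (b, m) ∈ insert (a, m) (B ∪ C) := by rw [heq]; exact Finset.mem_insert_self _ _
      have hth := min_pair_unique hma hBncm hCncm (b, m) hmem rfl
      exact hab (congrArg Prod.fst hth).symm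
    -- step 3: cardinality of each block
    have hcard : ∀ a ∈ S.erase m,
        (g a).card = (NCMs (below S m a)).card * (NCMs (above S a)).card := by
      intro a _
      rw [hgdef]
      rw [Finset.card_image_of_injOn, Finset.card_product]
      intro BC hBC BC' hBC' heq
      obtain ⟨h1, h2⟩ := Finset.mem_product.1 hBC
      obtain ⟨h1', h2'⟩ := Finset.mem_product.1 hBC'
      have e1 := filter_insert_union (mem_NCMs.1 h1) (mem_NCMs.1 h2)
      have e1' := filter_insert_union (mem_NCMs.1 h1') (mem_NCMs.1 h2')
      simp only at heq
      have hf : BC.1 = BC'.1 := by rw [← e1.1, ← e1'.1, heq]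
      have hs : BC.2 = BC'.2 := by rw [← e1.2, ← e1'.2, heq]
      exact Prod.ext hf hs
    rw [hunion, Finset.card_biUnion hdisj, Finset.sum_congr rfl hcard]
    -- step 4: evaluate the sum
    set r : ℕ → ℕ := fun a => ((S.erase m).filter (· < a)).card with hrdef
    have hbelow : ∀ a ∈ S.erase m, below S m a = (S.erase m).filter (· < a) := by
      intro a haem
      ext x
      simp only [below, Finset.mem_filter, Finset.mem_erase]
      constructor
      · rintro ⟨hxS, hmx, hxa⟩; exact ⟨⟨by omega, hxS⟩, hxa⟩
      · rintro ⟨⟨hxm, hxS⟩, hxa⟩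
        exact ⟨hxS, lt_of_le_of_ne (hmin x hxS) (Ne.symm hxm), hxa⟩
    have hcerase : (S.erase m).card = 2 * n + 1 := by
      rw [Finset.card_erase_of_mem hm]; omega
    have hsplit : ∀ a ∈ S.erase m, r a + 1 + (above S a).card = 2 * n + 1 := by
      intro a haem
      have hma : m < a := lt_of_le_of_ne (hmin a (Finset.mem_erase.1 haem).2)
        (Ne.symm (Finset.mem_erase.1 haem).1)
      have h1 := Finset.card_filter_add_card_filter_not
        (s := S.erase m) (p := (· < a))
      have h2 : (S.erase m).filter (fun x => ¬ x < a) = insert a ((S.erase m).filter (a < ·)) := by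
        ext x
        simp only [Finset.mem_filter, Finset.mem_insert, Finset.mem_erase]
        constructor
        · rintro ⟨⟨hxm, hxS⟩, hge⟩
          rcases Nat.eq_or_lt_of_le (Nat.le_of_not_lt hge) with h | h
          · exact Or.inl h.symm
          · exact Or.inr ⟨⟨hxm, hxS⟩, h⟩
        · rintro (rfl | ⟨⟨hxm, hxS⟩, hlt⟩)
          · exact ⟨⟨by omega, (Finset.mem_erase.1 haem).2⟩, lt_irrefl x⟩
          · exact ⟨⟨hxm, hxS⟩, by omega⟩
      have h3 : a ∉ (S.erase m).filter (a < ·) := by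
        intro hmem; exact absurd (Finset.mem_filter.1 hmem).2 (lt_irrefl a)
      have h4 : above S a = (S.erase m).filter (a < ·) := by
        ext x
        simp only [above, Finset.mem_filter, Finset.mem_erase]
        constructor
        · rintro ⟨hxS, hax⟩; exact ⟨⟨by omega, hxS⟩, hax⟩
        · rintro ⟨⟨hxm, hxS⟩, hax⟩; exact ⟨hxS, hax⟩
      rw [h2, Finset.card_insert_of_notMem h3] at h1
      rw [h4]
      rw [hcerase] at h1
      simp only [hrdef]
      omega
    set F : ℕ → ℕ := fun j => if j % 2 = 0 then catalan (j / 2) * catalan (n - j / 2) else 0 with hFdef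
    have hterm : ∀ a ∈ S.erase m,
        (NCMs (below S m a)).card * (NCMs (above S a)).card = F (r a) := by
      intro a haem
      have hb : (below S m a).card = r a := by rw [hbelow a haem]
      have hsp := hsplit a haem
      by_cases hpar : r a % 2 = 0
      · have h1 := IH (r a / 2) (by omega) (below S m a) (by omega)
        have h2 := IH (n - r a / 2) (by omega) (above S a) (by omega)
        rw [h1, h2, hFdef]
        simp only [if_pos hpar]
      · have hbe : NCMs (below S m a) = ∅ := by
          rw [Finset.eq_empty_iff_forall_notMem]
          intro A hA
          have := (mem_NCMs.1 hA).card_eq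
          omega
        rw [hbe, hFdef]
        simp only [Finset.card_empty, Nat.zero_mul, if_neg hpar]
    rw [Finset.sum_congr rfl hterm]
    -- the function r is injective with image range (2n+1)
    have hrub : ∀ a ∈ S.erase m, r a ≤ 2 * n := by
      intro a haem; have := hsplit a haem; omega
    have hrmono : ∀ a ∈ S.erase m, ∀ b ∈ S.erase m, a < b → r a < r b := by
      intro a haem b hbem hab
      apply Finset.card_lt_card
      rw [Finset.ssubset_iff_of_subset
        (Finset.monotone_filter_right _ (fun x _ hx => lt_trans hx hab))]
      exact ⟨a, Finset.mem_filter.2 ⟨haem, hab⟩,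
        fun hmem => absurd (Finset.mem_filter.1 hmem).2 (lt_irrefl a)⟩
    have hinj : ∀ a ∈ S.erase m, ∀ b ∈ S.erase m, r a = r b → a = b := by
      intro a ha b hb heq
      rcases Nat.lt_trichotomy a b with h | h | h
      · have := hrmono a ha b hb h; omega
      · exact h
      · have := hrmono b hb a ha h; omega
    have himg : (S.erase m).image r = Finset.range (2 * n + 1) := by
      apply Finset.eq_of_subset_of_card_le
      · intro j hj
        obtain ⟨a, ha, rfl⟩ := Finset.mem_image.1 hj
        exact Finset.mem_range.2 (by have := hrub a ha; omega)
      · rw [Finset.card_range, Finset.card_image_of_injOn (fun a ha b hb => hinj a ha b hb), hcerase]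
    have hsum1 : ∑ a ∈ S.erase m, F (r a) = ∑ j ∈ Finset.range (2 * n + 1), F j := by
      rw [← himg, Finset.sum_image hinj]
    rw [hsum1]
    -- keep only even indices
    have hsub : (Finset.range (n + 1)).image (fun i => 2 * i) ⊆ Finset.range (2 * n + 1) := by
      intro j hj
      obtain ⟨i, hi, rfl⟩ := Finset.mem_image.1 hj
      exact Finset.mem_range.2 (by have := Finset.mem_range.1 hi; omega)
    have hzero : ∀ j ∈ Finset.range (2 * n + 1),
        j ∉ (Finset.range (n + 1)).image (fun i => 2 * i) → F j = 0 := by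
      intro j hj hjn
      by_cases hpar : j % 2 = 0
      · exfalso
        apply hjn
        refine Finset.mem_image.2 ⟨j / 2, Finset.mem_range.2 ?_, by omega⟩
        have := Finset.mem_range.1 hj; omega
      · rw [hFdef]; simp only [if_neg hpar]
    rw [← Finset.sum_subset hsub hzero,
      Finset.sum_image (by intro a _ b _ h; simp only at h; omega)]
    have hFeval : ∀ i ∈ Finset.range (n + 1), F (2 * i) = catalan i * catalan (n - i) := by
      intro i _
      have h2i : (2 * i) % 2 = 0 := Nat.mul_mod_right 2 i
      have h2d : (2 * i) / 2 = i := by omega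
      rw [hFdef]
      simp only [h2i, h2d]
      simp only [if_true]
    rw [Finset.sum_congr rfl hFeval, catalan_succ]
    exact (Fin.sum_univ_eq_sum_range (fun i => catalan i * catalan (n - i)) (n + 1)).symm
lemma bind_split (A : Finset (ℕ × ℕ)) :
    A.val.bind (fun p => ({p.1, p.2} : Multiset ℕ)) =
      A.val.bind (fun p => if p.2 = 0 then ({p.1} : Multiset ℕ) else {p.1, p.2}) +
      A.val.bind (fun p => if p.2 = 0 then ({0} : Multiset ℕ) else 0) := by
  rw [← Multiset.bind_add]
  refine Multiset.bind_congr fun p _ => ?_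
  by_cases h : p.2 = 0
  · rw [if_pos h, if_pos h, h]
    rfl
  · rw [if_neg h, if_neg h, add_zero]

lemma bind_zero_eq {A : Finset (ℕ × ℕ)} {z : ℕ × ℕ}
    (hf : A.filter (fun p => p.2 = 0) = {z}) :
    A.val.bind (fun p => if p.2 = 0 then ({0} : Multiset ℕ) else 0) = {0} := by
  classical
  have hzA : z ∈ A ∧ z.2 = 0 := by
    have : z ∈ A.filter (fun p => p.2 = 0) := by rw [hf]; exact Finset.mem_singleton_self z
    exact ⟨(Finset.mem_filter.1 this).1, (Finset.mem_filter.1 this).2⟩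
  have hcons : A.val = z ::ₘ A.val.erase z := (Multiset.cons_erase hzA.1).symm
  rw [hcons, Multiset.cons_bind, if_pos hzA.2]
  have hrest : (A.val.erase z).bind (fun p => if p.2 = 0 then ({0} : Multiset ℕ) else 0) = 0 := by
    have h1 : ∀ p ∈ A.val.erase z, (if p.2 = 0 then ({0} : Multiset ℕ) else 0) = 0 := by
      intro p hp
      have hpz : p ≠ z ∧ p ∈ A.val := (Multiset.Nodup.mem_erase_iff A.nodup).1 hp
      have : p.2 ≠ 0 := by
        intro h0
        have : p ∈ A.filter (fun p => p.2 = 0) := Finset.mem_filter.2 ⟨hpz.2, h0⟩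
        rw [hf, Finset.mem_singleton] at this
        exact hpz.1 this
      rw [if_neg this]
    calc (A.val.erase z).bind (fun p => if p.2 = 0 then ({0} : Multiset ℕ) else 0)
        = (A.val.erase z).bind (fun _ => (0 : Multiset ℕ)) := Multiset.bind_congr h1
      _ = 0 := Multiset.bind_zero _
  rw [hrest, add_zero]

theorem nested_odd_collections_card_catalan (N k : ℕ) (hk : 0 < k) (l : List ℕ)
    (hsort : l.Pairwise (· > ·)) (hpos : ∀ x ∈ l, 0 < x)
    (hsum : l.sum = N) (hlen : l.length = 2 * k - 1) :
    Nat.card {A : Finset (ℕ × ℕ) //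
      A.card = k ∧
      (∀ p ∈ A, p.2 ≠ 0 → p.1 > p.2) ∧
      (A.filter (fun p => p.2 = 0)).card = 1 ∧
      (A.val.bind fun p => if p.2 = 0 then {p.1} else {p.1, p.2}) = (l : Multiset ℕ) ∧
      (∀ p ∈ A, ∀ q ∈ A, p.2 ≠ 0 → q.2 ≠ 0 → ¬(p.1 > q.1 ∧ q.1 ≥ p.2 ∧ p.2 > q.2)) ∧
      (∀ p ∈ A, ∀ q ∈ A, p.2 ≠ 0 → q.2 = 0 → ¬(p.1 ≥ q.1 ∧ q.1 ≥ p.2))} = catalan k := by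
  classical
  have hnodup : l.Nodup := List.Pairwise.imp (fun h => ne_of_gt h) hsort
  have h0l : (0 : ℕ) ∉ l := fun h => absurd (hpos 0 h) (lt_irrefl 0)
  set S : Finset ℕ := insert 0 l.toFinset with hSdef
  have h0t : (0 : ℕ) ∉ l.toFinset := fun h => h0l (List.mem_toFinset.1 h)
  have htv : l.toFinset.val = (l : Multiset ℕ) := by
    rw [List.toFinset_val, hnodup.dedup]
  have hSval : S.val = 0 ::ₘ (l : Multiset ℕ) := by
    rw [hSdef, Finset.insert_val_of_notMem h0t, htv]
  have hScard : S.card = 2 * k := by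
    rw [hSdef, Finset.card_insert_of_notMem h0t, List.toFinset_card_of_nodup hnodup, hlen]
    omega
  have key : ∀ A : Finset (ℕ × ℕ),
      (A.card = k ∧
      (∀ p ∈ A, p.2 ≠ 0 → p.1 > p.2) ∧
      (A.filter (fun p => p.2 = 0)).card = 1 ∧
      (A.val.bind fun p => if p.2 = 0 then {p.1} else {p.1, p.2}) = (l : Multiset ℕ) ∧
      (∀ p ∈ A, ∀ q ∈ A, p.2 ≠ 0 → q.2 ≠ 0 → ¬(p.1 > q.1 ∧ q.1 ≥ p.2 ∧ p.2 > q.2)) ∧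
      (∀ p ∈ A, ∀ q ∈ A, p.2 ≠ 0 → q.2 = 0 → ¬(p.1 ≥ q.1 ∧ q.1 ≥ p.2))) ↔ IsNCM S A := by
    intro A
    constructor
    · rintro ⟨hcard, hgt, hone, hbind, hnc1, hnc2⟩
      obtain ⟨z, hz⟩ := Finset.card_eq_one.1 hone
      have hg0 := bind_zero_eq hz
      have hp1l : ∀ p ∈ A, p.2 = 0 → p.1 ∈ l := by
        intro p hp hp2
        have : p.1 ∈ A.val.bind (fun p => if p.2 = 0 then ({p.1} : Multiset ℕ) else {p.1, p.2}) :=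
          Multiset.mem_bind.2 ⟨p, hp, by rw [if_pos hp2]; exact Multiset.mem_singleton_self _⟩
        rw [hbind] at this
        exact Multiset.mem_coe.1 this
      refine ⟨?_, ?_, ?_⟩
      · intro p hp
        by_cases h2 : p.2 = 0
        · rw [h2]; exact hpos p.1 (hp1l p hp h2)
        · exact hgt p hp h2
      · rw [bind_split, hbind, hg0, hSval, add_comm, Multiset.singleton_add]
      · intro p hp q hq
        rintro ⟨h1, h2, h3⟩
        by_cases hq2 : q.2 = 0
        · by_cases hp2 : p.2 = 0
          · rw [hp2] at h3; omega
          · exact hnc2 p hp q hq hp2 hq2 ⟨le_of_lt h1, h2⟩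
        · by_cases hp2 : p.2 = 0
          · rw [hp2] at h3; omega
          · exact hnc1 p hp q hq hp2 hq2 ⟨h1, h2, h3⟩
    · intro h
      have h0S : (0 : ℕ) ∈ S := Finset.mem_insert_self 0 _
      have hmin0 : ∀ x ∈ S, 0 ≤ x := fun x _ => Nat.zero_le x
      obtain ⟨z, hzA, hz2⟩ := h.exists_min_pair h0S hmin0
      have hfz : A.filter (fun p => p.2 = 0) = {z} := by
        ext p
        simp only [Finset.mem_filter, Finset.mem_singleton]
        constructor
        · rintro ⟨hpA, hp2⟩
          by_contra hne
          have := (h.coords_ne hpA hzA hne).2.2.2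
          rw [hp2, hz2] at this
          exact this rfl
        · rintro rfl; exact ⟨hzA, hz2⟩
      have hg0 := bind_zero_eq hfz
      have hbs := bind_split A
      rw [h.2.1, hg0, hSval] at hbs
      have hbind : (A.val.bind fun p => if p.2 = 0 then ({p.1} : Multiset ℕ) else {p.1, p.2})
          = (l : Multiset ℕ) := by
        have : ({0} : Multiset ℕ) + (l : Multiset ℕ) =
            (A.val.bind fun p => if p.2 = 0 then ({p.1} : Multiset ℕ) else {p.1, p.2}) + {0} := by
          rw [← hbs, Multiset.singleton_add]
        rw [add_comm] at this
        exact (add_right_cancel this.symm)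
      refine ⟨?_, fun p hp _ => h.1 p hp, by rw [hfz]; rfl, hbind, ?_, ?_⟩
      · have := h.card_eq
        omega
      · intro p hp q hq hp2 hq2
        rintro ⟨h1, h2, h3⟩
        exact h.2.2 p hp q hq ⟨h1, h2, h3⟩
      · intro p hp q hq hp2 hq2
        rintro ⟨h1, h2⟩
        have hne : p ≠ q := fun he => hp2 (he ▸ hq2)
        have hne1 : p.1 ≠ q.1 := (h.coords_ne hp hq hne).1
        refine h.2.2 p hp q hq ⟨by omega, h2, by rw [hq2]; omega⟩
  have hequiv : {A : Finset (ℕ × ℕ) //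
      A.card = k ∧
      (∀ p ∈ A, p.2 ≠ 0 → p.1 > p.2) ∧
      (A.filter (fun p => p.2 = 0)).card = 1 ∧
      (A.val.bind fun p => if p.2 = 0 then {p.1} else {p.1, p.2}) = (l : Multiset ℕ) ∧
      (∀ p ∈ A, ∀ q ∈ A, p.2 ≠ 0 → q.2 ≠ 0 → ¬(p.1 > q.1 ∧ q.1 ≥ p.2 ∧ p.2 > q.2)) ∧
      (∀ p ∈ A, ∀ q ∈ A, p.2 ≠ 0 → q.2 = 0 → ¬(p.1 ≥ q.1 ∧ q.1 ≥ p.2))} ≃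
      {A : Finset (ℕ × ℕ) // A ∈ NCMs S} :=
    Equiv.subtypeEquivRight (fun A => (key A).trans mem_NCMs.symm)
  rw [Nat.card_congr hequiv, Nat.card_eq_finsetCard]
  exact card_NCMs k S hScard
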